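/- Let Ω ⊆ ℝ^n be open, let a_1,…,a_r : Ω → ℝ be nonnegative continuous functions and w : Ω → ℝ^r continuous. Suppose ξ, ξ′ : Ω → ℝ^r are C² and both satisfy the equation −Δζ + Σ_{j=1}^r a_j e^{⟨v_j,ζ⟩} v_j = w on Ω. Then at every point of Ω one has (1/2)·Δ(‖ξ − ξ′‖²) ≥ Σ_{j=1}^r a_j (e^{⟨v_j,ξ⟩} − e^{⟨v_j,ξ′⟩}) ⟨v_j, ξ − ξ′⟩ ≥ 0; in particular ‖ξ − ξ′‖² has nonnegative Euclidean Laplacian on Ω. (Euclidean-domain version of Lemma 2.2.) -/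

import Mathlib

open scoped RealInnerProductSpace

/-- The standard basis `u_1, …, u_r` of `ℝ^r`. -/
noncomputable def stdU {r : ℕ} (j : Fin r) : EuclideanSpace ℝ (Fin r) :=
  EuclideanSpace.single j 1

/-- The vectors `v_j = u_{j+1} - u_j` (`j = 1, …, r-1`), `v_r = u_1 - u_r`. -/
noncomputable def stdV {r : ℕ} (j : Fin r) : EuclideanSpace ℝ (Fin r) :=
  stdU (⟨(j.val + 1) % r, Nat.mod_lt _ j.pos⟩ : Fin r) - stdU j

/-- The Euclidean Laplacian `Δf = Σ_i ∂²f/∂x_i²` (componentwise for vector-valued `f`). -/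
noncomputable def lap {n : ℕ} {F : Type*} [NormedAddCommGroup F] [NormedSpace ℝ F]
    (f : EuclideanSpace ℝ (Fin n) → F) (x : EuclideanSpace ℝ (Fin n)) : F :=
  ∑ i : Fin n, iteratedFDeriv ℝ 2 f x (fun _ => EuclideanSpace.single i 1)

variable {n : ℕ} {F : Type*} [NormedAddCommGroup F] [InnerProductSpace ℝ F]

lemma fderiv2_sub_apply (f g : EuclideanSpace ℝ (Fin n) → F) (x : EuclideanSpace ℝ (Fin n))
    (hf : ContDiffAt ℝ 2 f x) (hg : ContDiffAt ℝ 2 g x) (m : Fin 2 → EuclideanSpace ℝ (Fin n)) :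
    iteratedFDeriv ℝ 2 (fun y => f y - g y) x m
      = iteratedFDeriv ℝ 2 f x m - iteratedFDeriv ℝ 2 g x m := by
  have hf' : ∀ᶠ y in nhds x, ContDiffAt ℝ 2 f y := hf.eventually (by norm_num)
  have hg' : ∀ᶠ y in nhds x, ContDiffAt ℝ 2 g y := hg.eventually (by norm_num)
  have hev : (fun y => fderiv ℝ (fun z => f z - g z) y)
      =ᶠ[nhds x] fun y => fderiv ℝ f y - fderiv ℝ g y := by
    filter_upwards [hf', hg'] with y hfy hgy
    exact fderiv_fun_sub (hfy.differentiableAt two_ne_zero) (hgy.differentiableAt two_ne_zero)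
  have hdf : DifferentiableAt ℝ (fderiv ℝ f) x :=
    (hf.fderiv_right (m := 1) (by norm_num)).differentiableAt one_ne_zero
  have hdg : DifferentiableAt ℝ (fderiv ℝ g) x :=
    (hg.fderiv_right (m := 1) (by norm_num)).differentiableAt one_ne_zero
  rw [iteratedFDeriv_two_apply, iteratedFDeriv_two_apply, iteratedFDeriv_two_apply,
    hev.fderiv_eq, fderiv_fun_sub hdf hdg]
  simp

lemma second_deriv_norm_sq (η : EuclideanSpace ℝ (Fin n) → F)
    (x v : EuclideanSpace ℝ (Fin n)) (hη : ContDiffAt ℝ 2 η x) :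
    iteratedFDeriv ℝ 2 (fun y => ‖η y‖ ^ 2) x (fun _ => v)
      = 2 * ‖fderiv ℝ η x v‖ ^ 2 + 2 * ⟪η x, iteratedFDeriv ℝ 2 η x (fun _ => v)⟫ := by
  set g := fun y => ‖η y‖ ^ 2 with hgdef
  have hg : ContDiffAt ℝ 2 g x := hη.norm_sq ℝ
  have hdg : DifferentiableAt ℝ (fderiv ℝ g) x :=
    (hg.fderiv_right (m := 1) (by norm_num)).differentiableAt one_ne_zero
  have hdη : DifferentiableAt ℝ (fderiv ℝ η) x :=
    (hη.fderiv_right (m := 1) (by norm_num)).differentiableAt one_ne_zero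
  have h1 : iteratedFDeriv ℝ 2 g x (fun _ => v) = fderiv ℝ (fun y => fderiv ℝ g y v) x v := by
    rw [iteratedFDeriv_two_apply, fderiv_clm_apply hdg (differentiableAt_const v)]
    simp
  have hev : (fun y => fderiv ℝ g y v) =ᶠ[nhds x]
      fun y => 2 * ⟪η y, fderiv ℝ η y v⟫ := by
    filter_upwards [hη.eventually (by norm_num)] with y hy
    have := ((hy.differentiableAt two_ne_zero).hasFDerivAt).norm_sq
    rw [this.fderiv]
    simp [two_smul]; ring
  have hP : HasFDerivAt (fun y => fderiv ℝ η y v)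
      ((fderiv ℝ (fderiv ℝ η) x).flip v) x := by
    have := hdη.hasFDerivAt.clm_apply (hasFDerivAt_const v x)
    simpa using this
  have hinner : HasFDerivAt (fun y => ⟪η y, fderiv ℝ η y v⟫)
      ((fderivInnerCLM ℝ (η x, fderiv ℝ η x v)).comp
        ((fderiv ℝ η x).prod ((fderiv ℝ (fderiv ℝ η) x).flip v))) x :=
    HasFDerivAt.inner ℝ ((hη.differentiableAt two_ne_zero).hasFDerivAt) hP
  have hmul := hinner.const_mul (2 : ℝ)
  rw [h1, hev.fderiv_eq, hmul.fderiv]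
  rw [iteratedFDeriv_two_apply]
  simp [fderivInnerCLM_apply, real_inner_self_eq_norm_sq, real_inner_comm]
  ring

/-- Euclidean-domain version of Lemma 2.2: for two `C²` solutions `ξ, ξ'` of
`−Δζ + Σ_j a_j e^{⟨v_j,ζ⟩} v_j = w` on `Ω`, one has
`(1/2)Δ(‖ξ−ξ'‖²) ≥ Σ_j a_j (e^{⟨v_j,ξ⟩} − e^{⟨v_j,ξ'⟩}) ⟨v_j, ξ−ξ'⟩ ≥ 0` on `Ω`. -/
theorem subharmonicity_of_difference (n r : ℕ) (hr : 2 ≤ r)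
    (Ω : Set (EuclideanSpace ℝ (Fin n))) (hΩ : IsOpen Ω)
    (a : Fin r → EuclideanSpace ℝ (Fin n) → ℝ)
    (ha_cont : ∀ j, ContinuousOn (a j) Ω) (ha_nonneg : ∀ j, ∀ x ∈ Ω, 0 ≤ a j x)
    (w : EuclideanSpace ℝ (Fin n) → EuclideanSpace ℝ (Fin r)) (hw : ContinuousOn w Ω)
    (ξ ξ' : EuclideanSpace ℝ (Fin n) → EuclideanSpace ℝ (Fin r))
    (hξ : ContDiffOn ℝ 2 ξ Ω) (hξ' : ContDiffOn ℝ 2 ξ' Ω)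
    (heq : ∀ x ∈ Ω, -lap ξ x + ∑ j : Fin r, (a j x * Real.exp ⟪stdV j, ξ x⟫) • stdV j = w x)
    (heq' : ∀ x ∈ Ω, -lap ξ' x + ∑ j : Fin r, (a j x * Real.exp ⟪stdV j, ξ' x⟫) • stdV j = w x) :
    ∀ x ∈ Ω,
      (∑ j : Fin r, a j x * (Real.exp ⟪stdV j, ξ x⟫ - Real.exp ⟪stdV j, ξ' x⟫) *
          ⟪stdV j, ξ x - ξ' x⟫) ≤ (1 / 2) * lap (fun y => ‖ξ y - ξ' y‖ ^ 2) x ∧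
      0 ≤ ∑ j : Fin r, a j x * (Real.exp ⟪stdV j, ξ x⟫ - Real.exp ⟪stdV j, ξ' x⟫) *
          ⟪stdV j, ξ x - ξ' x⟫ := by
  intro x hx
  have hξx : ContDiffAt ℝ 2 ξ x := (hξ x hx).contDiffAt (hΩ.mem_nhds hx)
  have hξ'x : ContDiffAt ℝ 2 ξ' x := (hξ' x hx).contDiffAt (hΩ.mem_nhds hx)
  have hηx : ContDiffAt ℝ 2 (fun y => ξ y - ξ' y) x := hξx.sub hξ'x
  -- Laplacian of the difference
  have hlapsub : lap (fun y => ξ y - ξ' y) x = lap ξ x - lap ξ' x := by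
    unfold lap
    rw [← Finset.sum_sub_distrib]
    exact Finset.sum_congr rfl fun i _ => fderiv2_sub_apply ξ ξ' x hξx hξ'x _
  -- from the two PDEs
  have hA : lap ξ x = (∑ j : Fin r, (a j x * Real.exp ⟪stdV j, ξ x⟫) • stdV j) - w x := by
    rw [← heq x hx]; abel
  have hB : lap ξ' x = (∑ j : Fin r, (a j x * Real.exp ⟪stdV j, ξ' x⟫) • stdV j) - w x := by
    rw [← heq' x hx]; abel
  have hdiff : lap ξ x - lap ξ' x = ∑ j : Fin r,
      ((a j x * Real.exp ⟪stdV j, ξ x⟫ - a j x * Real.exp ⟪stdV j, ξ' x⟫) • stdV j) := by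
    rw [hA, hB, sub_sub_sub_cancel_right, ← Finset.sum_sub_distrib]
    simp [sub_smul]
  have hinner : ⟪ξ x - ξ' x, lap (fun y => ξ y - ξ' y) x⟫
      = ∑ j : Fin r, a j x * (Real.exp ⟪stdV j, ξ x⟫ - Real.exp ⟪stdV j, ξ' x⟫) *
          ⟪stdV j, ξ x - ξ' x⟫ := by
    rw [hlapsub, hdiff, inner_sum]
    refine Finset.sum_congr rfl fun j _ => ?_
    rw [real_inner_smul_right, real_inner_comm (ξ x - ξ' x) (stdV j)]
    ring
  have hlapnorm : lap (fun y => ‖ξ y - ξ' y‖ ^ 2) x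
      = 2 * (∑ i : Fin n, ‖fderiv ℝ (fun y => ξ y - ξ' y) x (EuclideanSpace.single i 1)‖ ^ 2)
        + 2 * ⟪ξ x - ξ' x, lap (fun y => ξ y - ξ' y) x⟫ := by
    unfold lap
    rw [inner_sum, Finset.mul_sum, Finset.mul_sum, ← Finset.sum_add_distrib]
    exact Finset.sum_congr rfl fun i _ => second_deriv_norm_sq _ x _ hηx
  constructor
  · rw [hlapnorm, ← hinner]
    have hsq : 0 ≤ ∑ i : Fin n,
        ‖fderiv ℝ (fun y => ξ y - ξ' y) x (EuclideanSpace.single i 1)‖ ^ 2 :=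
      Finset.sum_nonneg fun i _ => sq_nonneg _
    nlinarith [hsq]
  · refine Finset.sum_nonneg fun j _ => ?_
    have h := ha_nonneg j x hx
    rw [inner_sub_right, mul_assoc]
    apply mul_nonneg h
    rcases le_total ⟪stdV j, ξ x⟫ ⟪stdV j, ξ' x⟫ with hle | hle
    · have := Real.exp_le_exp.2 hle; nlinarith
    · exact mul_nonneg (sub_nonneg.2 (Real.exp_le_exp.2 hle)) (sub_nonneg.2 hle)
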